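/- Set J₀ := {0} × J, an ideal of A⋈^f J. The map sending a prime ideal Q of B to Q̄^f := {(a, f(a)+j) : a ∈ A, j ∈ J, f(a)+j ∈ Q} establishes a bijection between the set of minimal prime ideals of B not containing J and the set of minimal prime ideals of A⋈^f J not containing J₀. -/

import Mathlib

section Amalgamation

variable {A B : Type*} [CommRing A] [CommRing B]

/-- The amalgamation `A ⋈^f J` of `A` with `B` along the ideal `J` of `B` with respect to
the ring homomorphism `f : A → B`, realized as the subring
`{(a, f a + j) | a ∈ A, j ∈ J}` of `A × B`. -/
def amalg (f : A →+* B) (J : Ideal B) : Subring (A × B) where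
  carrier := {x : A × B | x.2 - f x.1 ∈ J}
  zero_mem' := by simp
  one_mem' := by simp
  add_mem' := by
    intro x y hx hy
    simp only [Set.mem_setOf_eq, Prod.fst_add, Prod.snd_add, map_add] at *
    have h : x.2 + y.2 - (f x.1 + f y.1) = x.2 - f x.1 + (y.2 - f y.1) := by ring
    rw [h]; exact J.add_mem hx hy
  neg_mem' := by
    intro x hx
    simp only [Set.mem_setOf_eq, Prod.fst_neg, Prod.snd_neg, map_neg] at *
    have h : -x.2 - -f x.1 = -(x.2 - f x.1) := by ring
    rw [h]; exact J.neg_mem hx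
  mul_mem' := by
    intro x y hx hy
    simp only [Set.mem_setOf_eq, Prod.fst_mul, Prod.snd_mul, map_mul] at *
    have h : x.2 * y.2 - f x.1 * f y.1 = x.2 * (y.2 - f y.1) + (x.2 - f x.1) * f y.1 := by ring
    rw [h]
    exact J.add_mem (J.mul_mem_left _ hy) (J.mul_mem_right _ hx)

lemma mem_amalg_iff (f : A →+* B) (J : Ideal B) (x : A × B) :
    x ∈ amalg f J ↔ x.2 - f x.1 ∈ J := Iff.rfl

/-- The natural projection `p_A : A ⋈^f J → A`. -/
def pA (f : A →+* B) (J : Ideal B) : amalg f J →+* A :=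
  (RingHom.fst A B).comp (amalg f J).subtype

/-- The natural projection `p_B : A ⋈^f J → B`. -/
def pB (f : A →+* B) (J : Ideal B) : amalg f J →+* B :=
  (RingHom.snd A B).comp (amalg f J).subtype

/-- For an ideal `Q` of `B`, the ideal `Q̄^f = {(a, f a + j) | a ∈ A, j ∈ J, f a + j ∈ Q}`
of `A ⋈^f J`. -/
def idealQf (f : A →+* B) (J : Ideal B) (Q : Ideal B) : Ideal (amalg f J) :=
  Submodule.copy (Ideal.comap (pB f J) Q)
    {x : amalg f J | ∃ a : A, ∃ j ∈ J, (x : A × B) = (a, f a + j) ∧ f a + j ∈ Q}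
    (by
      ext x
      simp only [Set.mem_setOf_eq, SetLike.mem_coe, Ideal.mem_comap]
      constructor
      · rintro ⟨a, j, hj, hx, hQ⟩
        have h1 : pB f J x = f a + j := by
          show (x : A × B).2 = f a + j
          rw [hx]
        rw [h1]; exact hQ
      · intro hx
        refine ⟨(x : A × B).1, (x : A × B).2 - f (x : A × B).1,
          (mem_amalg_iff f J _).mp x.2, by ext <;> simp, ?_⟩
        simpa using (show (x : A × B).2 ∈ Q from hx))

/-- The ideal `J₀ = {0} × J` of `A ⋈^f J`. -/
def J0 (f : A →+* B) (J : Ideal B) : Ideal (amalg f J) :=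
  Submodule.copy (RingHom.ker (pA f J))
    {x : amalg f J | (x : A × B).1 = 0 ∧ (x : A × B).2 ∈ J}
    (by
      ext x
      simp only [Set.mem_setOf_eq, SetLike.mem_coe, RingHom.mem_ker]
      constructor
      · rintro ⟨h0, _⟩; exact h0
      · intro h0
        have h0' : (x : A × B).1 = 0 := h0
        refine ⟨h0', ?_⟩
        have h2 := (mem_amalg_iff f J _).mp x.2
        rw [h0', map_zero, sub_zero] at h2
        exact h2)

end Amalgamation

section Aux

variable {A B : Type*} [CommRing A] [CommRing B] (f : A →+* B) (J : Ideal B)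

lemma idealQf_eq (Q : Ideal B) : idealQf f J Q = Ideal.comap (pB f J) Q :=
  Submodule.copy_eq _ _ _

lemma J0_eq : J0 f J = RingHom.ker (pA f J) :=
  Submodule.copy_eq _ _ _

/-- The element `(0, j)` of the amalgamation, for `j ∈ J`. -/
def el {j : B} (hj : j ∈ J) : amalg f J :=
  ⟨(0, j), by simpa [mem_amalg_iff] using hj⟩

lemma el_mem_J0 {j : B} (hj : j ∈ J) : el f J hj ∈ J0 f J := by
  rw [J0_eq, RingHom.mem_ker]; rfl

lemma mem_comap_pB (Q : Ideal B) (x : amalg f J) :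
    x ∈ Ideal.comap (pB f J) Q ↔ (x : A × B).2 ∈ Q := Iff.rfl

/-- If `J ⊄ Q` then `J₀ ⊄ comap pB Q`. -/
lemma not_J0_le_comap {Q : Ideal B} (hQ : ¬ J ≤ Q) :
    ¬ J0 f J ≤ Ideal.comap (pB f J) Q := by
  obtain ⟨j, hjJ, hjQ⟩ := Set.not_subset.mp hQ
  intro hle
  exact hjQ ((mem_comap_pB f J Q _).mp (hle (el_mem_J0 f J hjJ)))

/-- Order-reflection: if `comap pB Q₁ ≤ comap pB Q₂` with `Q₂` prime not containing `J`,
then `Q₁ ≤ Q₂`. -/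
lemma le_of_comap_le {Q₁ Q₂ : Ideal B} (hQ₂ : Q₂.IsPrime) (hJQ₂ : ¬ J ≤ Q₂)
    (h : Ideal.comap (pB f J) Q₁ ≤ Ideal.comap (pB f J) Q₂) : Q₁ ≤ Q₂ := by
  obtain ⟨j, hjJ, hjQ⟩ := Set.not_subset.mp hJQ₂
  intro b hb
  have hbj : b * j ∈ J := J.mul_mem_left b hjJ
  have h1 : el f J hbj ∈ Ideal.comap (pB f J) Q₁ := by
    rw [mem_comap_pB]
    exact Q₁.mul_mem_right j hb
  have h2 : b * j ∈ Q₂ := (mem_comap_pB f J Q₂ _).mp (h h1)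
  exact (hQ₂.mul_mem_iff_mem_or_mem.mp h2).resolve_right hjQ

/-- Every prime of the amalgamation not containing `J₀` is `comap pB Q` for a prime `Q`
of `B` not containing `J`. -/
lemma exists_comap_eq {H : Ideal (amalg f J)} (hH : H.IsPrime) (hJ0H : ¬ J0 f J ≤ H) :
    ∃ Q : Ideal B, Q.IsPrime ∧ ¬ J ≤ Q ∧ H = Ideal.comap (pB f J) Q := by
  obtain ⟨x, hxJ0, hxH⟩ := Set.not_subset.mp hJ0H
  rw [SetLike.mem_coe, J0_eq, RingHom.mem_ker] at hxJ0
  have hx1 : (x : A × B).1 = 0 := hxJ0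
  set j0 : B := (x : A × B).2 with hj0
  have hj0J : j0 ∈ J := by
    have h2 := (mem_amalg_iff f J _).mp x.2
    rwa [hx1, map_zero, sub_zero] at h2
  -- the element `(0, b * j0)`
  set e : B → amalg f J := fun b => el f J (J.mul_mem_left b hj0J) with he
  have he_coe : ∀ b : B, (e b : A × B) = (0, b * j0) := fun b => rfl
  -- key multiplication identity: `e b * e c = e (b * c) * x`
  have hmul : ∀ b c : B, e b * e c = e (b * c) * x := by
    intro b c
    apply Subtype.ext
    rw [MulMemClass.coe_mul, MulMemClass.coe_mul, he_coe, he_coe, he_coe]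
    apply Prod.ext
    · simp [hx1]
    · show b * j0 * (c * j0) = b * c * j0 * (x : A × B).2
      rw [← hj0]; ring
  -- `e` is additive etc.
  have he_add : ∀ b c : B, e (b + c) = e b + e c := by
    intro b c
    apply Subtype.ext
    rw [AddMemClass.coe_add, he_coe, he_coe, he_coe]
    apply Prod.ext
    · simp
    · show (b + c) * j0 = b * j0 + c * j0; ring
  refine ⟨{ carrier := {b : B | e b ∈ H}
            zero_mem' := by
              show e 0 ∈ H
              have : e 0 = 0 := by
                apply Subtype.ext
                rw [he_coe]
                simp
              rw [this]; exact H.zero_mem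
            add_mem' := by
              intro b c hb hc
              show e (b + c) ∈ H
              rw [he_add]
              exact H.add_mem hb hc
            smul_mem' := by
              intro c b hb
              show e (c • b) ∈ H
              have h1 : e b * e c ∈ H := H.mul_mem_right _ hb
              rw [hmul] at h1
              have h2 : e (b * c) ∈ H := (hH.mul_mem_iff_mem_or_mem.mp h1).resolve_right hxH
              have : c • b = b * c := by rw [smul_eq_mul]; ring
              rwa [this] },
         ⟨?_, ?_⟩, ?_, ?_⟩
  · -- ne_top
    intro htop
    have h1 : e 1 ∈ H := by
      have : (1 : B) ∈ (⊤ : Ideal B) := Submodule.mem_top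
      rw [← htop] at this
      exact this
    have : e 1 = x := by
      apply Subtype.ext
      rw [he_coe]
      apply Prod.ext
      · exact hx1.symm
      · show 1 * j0 = (x : A × B).2; rw [one_mul]
    rw [this] at h1
    exact hxH h1
  · -- mem_or_mem
    intro b c hbc
    have h1 : e (b * c) * x ∈ H := H.mul_mem_right _ hbc
    rw [← hmul] at h1
    exact hH.mul_mem_iff_mem_or_mem.mp h1
  · -- ¬ J ≤ Q
    intro hle
    have h1 : e j0 ∈ H := hle hj0J
    have : e j0 = x * x := by
      apply Subtype.ext
      rw [MulMemClass.coe_mul, he_coe]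
      apply Prod.ext
      · simp [hx1]
      · rfl
    rw [this] at h1
    exact hxH ((hH.mul_mem_iff_mem_or_mem.mp h1).elim id id)
  · -- H = comap
    ext y
    rw [mem_comap_pB]
    show y ∈ H ↔ e (y : A × B).2 ∈ H
    have hxy : e (y : A × B).2 = x * y := by
      apply Subtype.ext
      rw [MulMemClass.coe_mul, he_coe]
      apply Prod.ext
      · simp [hx1]
      · show (y : A × B).2 * j0 = (x : A × B).2 * (y : A × B).2
        rw [← hj0]; ring
    rw [hxy]
    constructor
    · intro hy; exact H.mul_mem_left x hy
    · intro hy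
      exact (hH.mul_mem_iff_mem_or_mem.mp hy).resolve_left hxH

end Aux

/-- The map `Q ↦ Q̄^f` is a bijection between the minimal primes of `B` not containing `J`
and the minimal primes of `A ⋈^f J` not containing `J₀ = {0} × J`. -/
theorem stmt9 {A B : Type*} [CommRing A] [CommRing B] (f : A →+* B) (J : Ideal B) :
    Set.BijOn (fun Q : Ideal B => idealQf f J Q)
      {Q : Ideal B | Q ∈ minimalPrimes B ∧ ¬ J ≤ Q}
      {H : Ideal (amalg f J) | H ∈ minimalPrimes (amalg f J) ∧ ¬ J0 f J ≤ H} := by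
  have hmin : ∀ Q : Ideal B, Q ∈ minimalPrimes B ↔ Minimal (fun q : Ideal B => q.IsPrime ∧ ⊥ ≤ q) Q :=
    fun Q => Iff.rfl
  have hminH : ∀ H : Ideal (amalg f J),
      H ∈ minimalPrimes (amalg f J) ↔ Minimal (fun q : Ideal (amalg f J) => q.IsPrime ∧ ⊥ ≤ q) H :=
    fun H => Iff.rfl
  refine ⟨?_, ?_, ?_⟩
  · -- MapsTo
    rintro Q ⟨hQmin, hJQ⟩
    have hQp : Q.IsPrime := hQmin.1.1
    simp only [Set.mem_setOf_eq, idealQf_eq]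
    refine ⟨?_, not_J0_le_comap f J hJQ⟩
    refine ⟨⟨Ideal.IsPrime.comap _, bot_le⟩, ?_⟩
    rintro H' ⟨hH'p, -⟩ hle
    have hJ0H' : ¬ J0 f J ≤ H' := fun h =>
      not_J0_le_comap f J hJQ (h.trans hle)
    obtain ⟨Q', hQ'p, hJQ', hH'⟩ := exists_comap_eq f J hH'p hJ0H'
    rw [hH'] at hle ⊢
    have hQ'Q : Q' ≤ Q := le_of_comap_le f J hQp hJQ hle
    exact Ideal.comap_mono (hQmin.2 ⟨hQ'p, bot_le⟩ hQ'Q)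
  · -- InjOn
    rintro Q₁ ⟨hQ₁min, hJQ₁⟩ Q₂ ⟨hQ₂min, hJQ₂⟩ heq
    simp only [idealQf_eq] at heq
    exact le_antisymm
      (le_of_comap_le f J hQ₂min.1.1 hJQ₂ heq.le)
      (le_of_comap_le f J hQ₁min.1.1 hJQ₁ heq.ge)
  · -- SurjOn
    rintro H ⟨hHmin, hJ0H⟩
    have hHp : H.IsPrime := hHmin.1.1
    obtain ⟨Q, hQp, hJQ, hH⟩ := exists_comap_eq f J hHp hJ0H
    obtain ⟨Q', hQ'min, hQ'Q⟩ := Ideal.exists_minimalPrimes_le (bot_le (a := Q))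
    have hJQ' : ¬ J ≤ Q' := fun h => hJQ (h.trans hQ'Q)
    have hQ'p : Q'.IsPrime := hQ'min.1.1
    have hle : Ideal.comap (pB f J) Q' ≤ H := by
      rw [hH]; exact Ideal.comap_mono hQ'Q
    have hJ0' : ¬ J0 f J ≤ Ideal.comap (pB f J) Q' := not_J0_le_comap f J hJQ'
    have hHle : H ≤ Ideal.comap (pB f J) Q' :=
      hHmin.2 ⟨Ideal.IsPrime.comap _, bot_le⟩ hle
    refine ⟨Q', ⟨hQ'min, hJQ'⟩, ?_⟩
    show idealQf f J Q' = H
    rw [idealQf_eq]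
    exact le_antisymm hle hHle
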